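/- Let U ⊆ ℂ be a bounded open set and let (W_n) be a sequence of open subsets of U with 0 ∈ W_n for all n, and let W = ker((W_n)) be the kernel of the sequence. Then for every p ∈ W, liminf_{n→∞} η_{W_n}(p) ≥ η_W(p). (This is Proposition 1.5 of the paper for the trivial single-leaf nonsingular foliation of a bounded plane domain.) -/

import Mathlib

open Filter Metric Topology Set

/-- The kernel of a sequence of open sets: the union over `n` of the connected
component containing `0` of the interior of `⋂ k ≥ n, W k`. -/
def seqKernel {X : Type*} [TopologicalSpace X] [Zero X] (W : ℕ → Set X) : Set X :=
  ⋃ n, connectedComponentIn (interior (⋂ k, ⋂ (_ : n ≤ k), W k)) 0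

/-- The modulus-of-uniformization function of a plane domain `Ω` (for the trivial
single-leaf foliation): the supremum of `|f'(0)|` over holomorphic maps
`f : 𝔻 → Ω` with `f 0 = p` (with `sSup ∅ = 0`). -/
noncomputable def eta (Ω : Set ℂ) (p : ℂ) : ℝ :=
  sSup {r : ℝ | ∃ f : ℂ → ℂ, DifferentiableOn ℂ f (ball (0 : ℂ) 1) ∧ f 0 = p ∧
    (∀ z ∈ ball (0 : ℂ) 1, f z ∈ Ω) ∧ r = ‖deriv f 0‖}

/-- Proposition 1.5 for the trivial single-leaf foliation of a bounded plane
domain: if `W₀` is the kernel of the sequence `(W n)` of open subsets of a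
bounded open set `U`, then `liminf η_{W n} p ≥ η_{W₀} p` for all `p ∈ W₀`. -/
theorem eta_kernel_le_liminf (U : Set ℂ) (hUopen : IsOpen U)
    (hUbdd : Bornology.IsBounded U)
    (W : ℕ → Set ℂ) (hWopen : ∀ n, IsOpen (W n)) (hWU : ∀ n, W n ⊆ U)
    (h0 : ∀ n, (0 : ℂ) ∈ W n) :
    ∀ p ∈ seqKernel W, eta (seqKernel W) p ≤ liminf (fun n => eta (W n) p) atTop := by
  intro p hp
  obtain ⟨R, hUR⟩ := hUbdd.subset_ball (0 : ℂ)
  have hR : 0 < R := by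
    have := hUR (hWU 0 (h0 0)); simpa [mem_ball] using this
  -- the set whose sSup defines `eta Ω p`
  set S : Set ℂ → Set ℝ := fun Ω =>
    {r : ℝ | ∃ f : ℂ → ℂ, DifferentiableOn ℂ f (ball (0 : ℂ) 1) ∧ f 0 = p ∧
      (∀ z ∈ ball (0 : ℂ) 1, f z ∈ Ω) ∧ r = ‖deriv f 0‖} with hS
  -- Schwarz-type uniform bound
  have key : ∀ Ω : Set ℂ, Ω ⊆ U → ∀ r ∈ S Ω, r ≤ 2 * R := by
    intro Ω hΩ r hr
    obtain ⟨f, hf, hf0, hmaps, rfl⟩ := hr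
    have h2R : MapsTo f (ball (0 : ℂ) 1) (ball (f 0) (2 * R)) := by
      intro z hz
      have h1 : f z ∈ ball (0 : ℂ) R := hUR (hΩ (hmaps z hz))
      have h2 : f 0 ∈ ball (0 : ℂ) R := hUR (hΩ (hmaps 0 (by simp)))
      rw [mem_ball] at h1 h2 ⊢
      calc dist (f z) (f 0) ≤ dist (f z) 0 + dist 0 (f 0) := dist_triangle _ _ _
        _ < R + R := by rw [dist_comm (0 : ℂ)]; exact add_lt_add h1 h2
        _ = 2 * R := by ring
    have := Complex.norm_deriv_le_div_of_mapsTo_ball hf (h2R.mono_right ball_subset_closedBall) one_pos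
    simpa using this
  have hbdd : ∀ Ω : Set ℂ, Ω ⊆ U → BddAbove (S Ω) := fun Ω hΩ => ⟨2 * R, key Ω hΩ⟩
  have hnonneg : ∀ Ω : Set ℂ, (0 : ℝ) ≤ eta Ω p := by
    intro Ω
    apply Real.sSup_nonneg
    rintro r ⟨f, _, _, _, rfl⟩
    exact norm_nonneg _
  have hKU : seqKernel W ⊆ U := by
    intro x hx
    obtain ⟨_, ⟨n, rfl⟩, hx⟩ := hx
    have := connectedComponentIn_subset (interior (⋂ k, ⋂ (_ : n ≤ k), W k)) 0 hx
    have := interior_subset this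
    exact hWU n (by simp only [mem_iInter] at this; exact this n le_rfl)
  -- the sequence under the liminf
  set u : ℕ → ℝ := fun n => eta (W n) p with hu
  have hub : ∀ n, u n ≤ 2 * R := by
    intro n
    exact Real.sSup_le (key (W n) (hWU n)) (by positivity)
  have hcobdd : IsCoboundedUnder (· ≥ ·) atTop u :=
    (isBoundedUnder_of ⟨2 * R, hub⟩).isCoboundedUnder_ge
  -- Main step: each element of S (seqKernel W) is ≤ liminf
  apply Real.sSup_le _ (le_liminf_of_le hcobdd (Eventually.of_forall fun n => hnonneg _))
  rintro c ⟨f, hf, hf0, hmaps, rfl⟩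
  -- the components `V n` form a monotone family of open sets
  set V : ℕ → Set ℂ := fun n => connectedComponentIn (interior (⋂ k, ⋂ (_ : n ≤ k), W k)) 0
    with hV
  have hVopen : ∀ n, IsOpen (V n) := fun n => isOpen_interior.connectedComponentIn
  have hVmono : Monotone V := by
    apply monotone_nat_of_le_succ
    intro n
    apply connectedComponentIn_mono
    apply interior_mono
    intro x hx
    simp only [mem_iInter] at hx ⊢
    exact fun k hk => hx k (Nat.le_of_succ_le hk)
  have hVW : ∀ n k, n ≤ k → V n ⊆ W k := by
    intro n k hnk x hx
    have := interior_subset (connectedComponentIn_subset _ _ hx)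
    simp only [mem_iInter] at this
    exact this k hnk
  -- scaling argument
  have hr1 : ∀ r : ℝ, 0 < r → r < 1 → r * ‖deriv f 0‖ ≤ liminf u atTop := by
    intro r hr0 hr1
    -- compact image
    have hcb : closedBall (0 : ℂ) r ⊆ ball (0 : ℂ) 1 := closedBall_subset_ball hr1
    have hcomp : IsCompact (f '' closedBall (0 : ℂ) r) :=
      (isCompact_closedBall _ _).image_of_continuousOn (hf.continuousOn.mono hcb)
    have hcover : f '' closedBall (0 : ℂ) r ⊆ ⋃ n, V n := by
      rintro _ ⟨z, hz, rfl⟩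
      exact hmaps z (hcb hz)
    obtain ⟨N, hN⟩ := hcomp.elim_directed_cover V hVopen hcover (hVmono.directed_le)
    -- the rescaled map
    set g : ℂ → ℂ := fun z => f ((r : ℂ) * z) with hg
    have hmul : ∀ z : ℂ, z ∈ ball (0 : ℂ) 1 → (r : ℂ) * z ∈ closedBall (0 : ℂ) r := by
      intro z hz
      simp only [mem_closedBall, dist_zero_right, norm_mul, Complex.norm_real,
        Real.norm_of_nonneg hr0.le] at *
      nlinarith [norm_nonneg z, mem_ball_zero_iff.mp hz]
    have hgdiff : DifferentiableOn ℂ g (ball (0 : ℂ) 1) := by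
      apply DifferentiableOn.comp hf
      · exact (differentiable_id.const_mul _).differentiableOn
      · exact fun z hz => hcb (hmul z hz)
    have hg0 : g 0 = p := by simp [hg, hf0]
    have hgmaps : ∀ k, N ≤ k → ∀ z ∈ ball (0 : ℂ) 1, g z ∈ W k := by
      intro k hk z hz
      exact hVW N k hk (hN ⟨(r : ℂ) * z, hmul z hz, rfl⟩)
    have hderiv : deriv g 0 = (r : ℂ) * deriv f 0 := by
      have hfd : DifferentiableAt ℂ f 0 :=
        (hf.differentiableAt (isOpen_ball.mem_nhds (by simp))).congr_of_eventuallyEq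
          (by rfl)
      have h1 : HasDerivAt (fun z : ℂ => (r : ℂ) * z) (r : ℂ) 0 := by
        simpa using (hasDerivAt_id (0 : ℂ)).const_mul (r : ℂ)
      have h2 : HasDerivAt f (deriv f 0) ((r : ℂ) * 0) := by
        simpa using hfd.hasDerivAt
      have := h2.comp 0 h1
      rw [show g = f ∘ HMul.hMul (r : ℂ) from rfl]
      simpa [mul_comm] using this.deriv
    have hmem : ∀ k, N ≤ k → r * ‖deriv f 0‖ ∈ S (W k) := by
      intro k hk
      refine ⟨g, hgdiff, hg0, hgmaps k hk, ?_⟩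
      rw [hderiv]
      simp [Real.norm_of_nonneg hr0.le, abs_of_nonneg hr0.le]
    refine le_liminf_of_le hcobdd ?_
    filter_upwards [eventually_ge_atTop N] with k hk
    exact le_csSup (hbdd (W k) (hWU k)) (hmem k hk)
  -- let r → 1
  have htend : Tendsto (fun r : ℝ => r * ‖deriv f 0‖) (𝓝[<] 1) (𝓝 (‖deriv f 0‖)) := by
    have : Tendsto (fun r : ℝ => r * ‖deriv f 0‖) (𝓝 1) (𝓝 (1 * ‖deriv f 0‖)) :=
      (continuous_id.mul continuous_const).tendsto 1
    rw [one_mul] at this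
    exact this.mono_left nhdsWithin_le_nhds
  refine le_of_tendsto htend ?_
  filter_upwards [Ioo_mem_nhdsLT_of_mem (by constructor <;> norm_num :
    (1 : ℝ) ∈ Ioc (1/2 : ℝ) 1)] with r hr
  exact hr1 r (by linarith [hr.1]) hr.2
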